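/- Let H be a separable complex Hilbert space and S_H the unilateral shift on ℓ²(ℕ,H). For every closed subspace M ⊆ ℓ²(ℕ,H) invariant under S_H there exist a separable complex Hilbert space K and an isometry W : ℓ²(ℕ,K) → ℓ²(ℕ,H) satisfying W ∘ S_K = S_H ∘ W such that M = W(ℓ²(ℕ,K)). -/

import Mathlib

noncomputable section

open scoped ENNReal InnerProductSpace

set_option linter.unusedSectionVars false

namespace Shift

variable (H : Type*) [NormedAddCommGroup H] [InnerProductSpace ℂ H]

/-- The underlying function of the unilateral shift: `(shiftFun x) 0 = 0`,
`(shiftFun x) (n+1) = x n`. -/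
def shiftFun (x : ℕ → H) : ℕ → H
  | 0 => 0
  | n + 1 => x n

variable {H}

theorem memℓp_shiftFun {x : ℕ → H} (hx : Memℓp x 2) : Memℓp (shiftFun H x) 2 := by
  apply memℓp_gen
  have h2 : (0:ℝ) < (2 : ℝ≥0∞).toReal := by norm_num
  have hs : Summable fun n : ℕ => ‖x n‖ ^ (2 : ℝ≥0∞).toReal := (memℓp_gen_iff h2).1 hx
  exact (summable_nat_add_iff 1).1 (by simpa [shiftFun] using hs)

theorem tsum_shiftFun (x : ℕ → H) (hx : Memℓp x 2) :
    (∑' n, ‖shiftFun H x n‖ ^ (2 : ℝ≥0∞).toReal) = ∑' n, ‖x n‖ ^ (2 : ℝ≥0∞).toReal := by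
  have h2 : (0:ℝ) < (2 : ℝ≥0∞).toReal := by norm_num
  rw [Summable.tsum_eq_zero_add (memℓp_gen_iff h2 |>.1 (memℓp_shiftFun hx))]
  simp [shiftFun]

variable (H)

/-- The unilateral shift as a linear isometry on `ℓ²(ℕ, H)`. -/
def shiftLi : lp (fun _ : ℕ => H) 2 →ₗᵢ[ℂ] lp (fun _ : ℕ => H) 2 where
  toFun x := ⟨shiftFun H x, memℓp_shiftFun (lp.memℓp x)⟩
  map_add' x y := by
    apply lp.ext
    funext n
    cases n <;> simp [shiftFun, lp.coeFn_add] <;> first | exact (add_zero (0 : H)).symm | rfl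
  map_smul' c x := by
    apply lp.ext
    funext n
    cases n <;> simp [shiftFun, lp.coeFn_smul]
  norm_map' x := by
    have h2 : (0:ℝ) < (2 : ℝ≥0∞).toReal := by norm_num
    rw [lp.norm_eq_tsum_rpow h2, lp.norm_eq_tsum_rpow h2]
    congr 1
    exact tsum_shiftFun x (lp.memℓp x)

/-- The unilateral shift `S_H` on `ℓ²(ℕ, H)`, as a continuous linear map:
`(shift H x) 0 = 0` and `(shift H x) (n+1) = x n`. -/
def shift : lp (fun _ : ℕ => H) 2 →L[ℂ] lp (fun _ : ℕ => H) 2 :=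
  (shiftLi H).toContinuousLinearMap

variable {H}

/-! ### Auxiliary material for the proof -/

section Aux

open TopologicalSpace

theorem shiftLi_apply (x : lp (fun _ : ℕ => H) 2) (n : ℕ) :
    (shiftLi H x : ℕ → H) n = shiftFun H x n := rfl

theorem shiftLi_single (i : ℕ) (a : H) :
    shiftLi H (lp.single 2 i a) = lp.single 2 (i + 1) a := by
  apply lp.ext
  funext n
  rw [shiftLi_apply]
  cases n with
  | zero =>
    show (0 : H) = (lp.single 2 (i+1) a : ℕ → H) 0
    rw [lp.single_apply]
    rw [Pi.single_apply, if_neg (by omega : ¬ (0:ℕ) = i + 1)]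
  | succ n =>
    show (lp.single 2 i a : ℕ → H) n = (lp.single 2 (i+1) a : ℕ → H) (n+1)
    rw [lp.single_apply, lp.single_apply]
    by_cases h : n = i
    · subst h
      rw [Pi.single_eq_same, Pi.single_eq_same]
    · rw [Pi.single_apply, Pi.single_apply, if_neg h, if_neg (by omega : ¬ n + 1 = i + 1)]

theorem pow_shiftLi_apply_lt {n k : ℕ} (f : lp (fun _ : ℕ => H) 2) (hk : k < n) :
    ((shiftLi H ^ n) f : ℕ → H) k = 0 := by
  induction n generalizing k f with
  | zero => omega
  | succ n ih =>
    have h1 : (shiftLi H ^ (n + 1)) f = shiftLi H ((shiftLi H ^ n) f) := by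
      rw [pow_succ']; rfl
    rw [h1, shiftLi_apply]
    cases k with
    | zero => rfl
    | succ k => exact ih _ (by omega)

theorem pow_shiftLi_mem {M : Submodule ℂ (lp (fun _ : ℕ => H) 2)}
    (hMinv : ∀ x ∈ M, shiftLi H x ∈ M) {x : lp (fun _ : ℕ => H) 2} (hx : x ∈ M) (n : ℕ) :
    (shiftLi H ^ n) x ∈ M := by
  induction n with
  | zero => simpa using hx
  | succ n ih =>
    have h1 : (shiftLi H ^ (n + 1)) x = shiftLi H ((shiftLi H ^ n) x) := by
      rw [pow_succ']; rfl
    rw [h1]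
    exact hMinv _ ih

/-- `lp.single` is an isometry (in each coordinate, `p = 2`). -/
theorem isometry_lp_single {α : Type*} [DecidableEq α] (G : α → Type*)
    [∀ i, NormedAddCommGroup (G i)]
    (i : α) : Isometry (fun a : G i => lp.single 2 i a) := by
  have hsub : ∀ a b : G i, lp.single 2 i a - lp.single 2 i b = lp.single 2 i (a - b) := by
    intro a b
    apply lp.ext
    funext j
    by_cases h : j = i
    all_goals
      show (lp.single 2 i a : ∀ k, G k) j - (lp.single 2 i b : ∀ k, G k) j
        = (lp.single 2 i (a - b) : ∀ k, G k) j
    · subst h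
      rw [lp.single_apply_self, lp.single_apply_self, lp.single_apply_self]
    · rw [lp.single_apply_ne 2 i _ h, lp.single_apply_ne 2 i _ h, lp.single_apply_ne 2 i _ h,
        sub_zero]
  apply Isometry.of_dist_eq
  intro a b
  rw [dist_eq_norm, dist_eq_norm, hsub]
  have := lp.norm_single (p := 2) (E := G) (by norm_num) i (a - b)
  simpa using this

/-- `ℓ²` over a countable index type, with separable fibers, is separable. -/
theorem lp_two_separableSpace {α : Type*} [Countable α] {G : α → Type*}
    [∀ i, NormedAddCommGroup (G i)] [∀ i, SeparableSpace (G i)] :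
    SeparableSpace (lp G 2) := by
  classical
  let g : Finset α → (∀ i, G i) → lp G 2 := fun s v => ∑ i ∈ s, lp.single 2 i (v i)
  have hgcont : ∀ s, Continuous (g s) := by
    intro s
    refine continuous_finset_sum _ (fun i _ => ?_)
    exact ((isometry_lp_single G i).continuous).comp (continuous_apply i)
  have huniv : (Set.univ : Set (lp G 2)) ⊆
      closure (⋃ s : Finset α, Set.range (g s)) := by
    intro f _
    have hf := lp.hasSum_single (E := G) (by norm_num : (2:ℝ≥0∞) ≠ ⊤) f
    refine mem_closure_of_tendsto hf (Filter.Eventually.of_forall ?_)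
    intro s
    exact Set.mem_iUnion.2 ⟨s, ⟨fun i => f i, rfl⟩⟩
  have hsep2 : IsSeparable (Set.univ : Set (lp G 2)) :=
    IsSeparable.mono
      ((IsSeparable.iUnion fun s : Finset α => isSeparable_range (hgcont s)).closure) huniv
  exact isSeparable_univ_iff.1 hsep2

/-- A `1`-separated subset of a separable metric space is countable. -/
theorem countable_of_one_le_dist {F : Type*} [MetricSpace F] [SeparableSpace F]
    {s : Set F} (h : ∀ x ∈ s, ∀ y ∈ s, x ≠ y → 1 ≤ dist x y) : s.Countable := by
  obtain ⟨t, htc, htd⟩ := TopologicalSpace.exists_countable_dense F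
  have hex : ∀ x : s, ∃ y : F, y ∈ t ∧ dist (x : F) y < 1/2 := by
    intro x
    obtain ⟨y, hyt, hy⟩ := htd.exists_dist_lt (x : F) (by norm_num : (0:ℝ) < 1/2)
    exact ⟨y, hyt, hy⟩
  choose f hf1 hf2 using hex
  haveI : Countable t := htc.to_subtype
  have hinj : Function.Injective fun x : s => (⟨f x, hf1 x⟩ : t) := by
    intro x y hxy
    have hfe : f x = f y := congrArg Subtype.val hxy
    by_contra hne
    have hne' : (x : F) ≠ (y : F) := fun hc => hne (Subtype.ext hc)
    have h1 : 1 ≤ dist (x : F) (y : F) := h _ x.2 _ y.2 hne'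
    have h2 : dist (x : F) (y : F) ≤ dist (x : F) (f x) + dist ((y : F)) (f y) := by
      calc dist (x : F) (y : F) ≤ dist (x : F) (f x) + dist (f x) (y : F) := dist_triangle _ _ _
      _ = dist (x : F) (f x) + dist ((y : F)) (f y) := by rw [hfe, dist_comm (f y) ((y : F))]
    linarith [hf2 x, hf2 y]
  have : Countable s := Function.Injective.countable hinj
  exact Set.countable_coe_iff.1 this

set_option maxHeartbeats 1000000 in
/-- Reindexing `ℓ²(ι, ℂ)` along an equivalence of index types. -/
def lpCongr {ι κ : Type*} (e : ι ≃ κ) :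
    lp (fun _ : ι => ℂ) 2 ≃ₗᵢ[ℂ] lp (fun _ : κ => ℂ) 2 := by
  have h2 : (0:ℝ) < (2 : ℝ≥0∞).toReal := by norm_num
  have mem1 : ∀ f : lp (fun _ : ι => ℂ) 2, Memℓp (fun k : κ => f (e.symm k)) 2 := by
    intro f
    apply memℓp_gen
    have hs : Summable fun i : ι => ‖f i‖ ^ (2 : ℝ≥0∞).toReal := (memℓp_gen_iff h2).1 (lp.memℓp f)
    exact e.symm.summable_iff.2 hs
  have mem2 : ∀ g : lp (fun _ : κ => ℂ) 2, Memℓp (fun i : ι => g (e i)) 2 := by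
    intro g
    apply memℓp_gen
    have hs : Summable fun k : κ => ‖g k‖ ^ (2 : ℝ≥0∞).toReal := (memℓp_gen_iff h2).1 (lp.memℓp g)
    exact e.summable_iff.2 hs
  refine
    { toFun := fun f => ⟨fun k => f (e.symm k), mem1 f⟩
      invFun := fun g => ⟨fun i => g (e i), mem2 g⟩
      map_add' := ?_
      map_smul' := ?_
      left_inv := ?_
      right_inv := ?_
      norm_map' := ?_ }
  · intro f g
    apply lp.ext
    funext k
    show ((f + g : lp (fun _ : ι => ℂ) 2) : ι → ℂ) (e.symm k) = _
    rw [lp.coeFn_add]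
    rfl
  · intro c f
    apply lp.ext
    funext k
    show ((c • f : lp (fun _ : ι => ℂ) 2) : ι → ℂ) (e.symm k) = _
    rw [lp.coeFn_smul]
    rfl
  · intro f
    apply lp.ext
    funext i
    show (f : ι → ℂ) (e.symm (e i)) = (f : ι → ℂ) i
    rw [e.symm_apply_apply]
  · intro g
    apply lp.ext
    funext k
    show (g : κ → ℂ) (e (e.symm k)) = (g : κ → ℂ) k
    rw [e.apply_symm_apply]
  · intro f
    rw [lp.norm_eq_tsum_rpow h2, lp.norm_eq_tsum_rpow h2]
    congr 1
    exact e.symm.tsum_eq fun i => ‖f i‖ ^ (2 : ℝ≥0∞).toReal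

/-- Extensionality for continuous linear maps on `ℓ²(ℕ, G)` via `lp.single`. -/
theorem clm_ext_lp {G F : Type*} [NormedAddCommGroup G] [NormedSpace ℂ G]
    [NormedAddCommGroup F] [NormedSpace ℂ F]
    {A B : lp (fun _ : ℕ => G) 2 →L[ℂ] F}
    (h : ∀ i x, A (lp.single 2 i x) = B (lp.single 2 i x)) : A = B := by
  ext f
  have hf := lp.hasSum_single (E := fun _ : ℕ => G) (by norm_num : (2:ℝ≥0∞) ≠ ⊤) f
  have hA : HasSum (fun i => A (lp.single 2 i (f i))) (A f) := hf.mapL A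
  have hB : HasSum (fun i => B (lp.single 2 i (f i))) (B f) := hf.mapL B
  rw [show (fun i => A (lp.single 2 i (f i))) = fun i => B (lp.single 2 i (f i)) from
    funext fun i => h i (f i)] at hA
  exact hA.unique hB

end Aux

set_option maxHeartbeats 4000000
set_option synthInstance.maxHeartbeats 1000000

/-- Beurling-Lax-Halmos: every shift-invariant closed subspace of
`ℓ²(ℕ,H)` (`H` separable) is the range of a single inner operator. -/
theorem beurling_lax_halmos
    {H : Type*} [NormedAddCommGroup H] [InnerProductSpace ℂ H] [CompleteSpace H]
    [TopologicalSpace.SeparableSpace H]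
    (M : Submodule ℂ (lp (fun _ : ℕ => H) 2)) (hMclosed : IsClosed (M : Set (lp (fun _ : ℕ => H) 2)))
    (hMinv : ∀ x ∈ M, shift H x ∈ M) :
    ∃ (K : Type) (_ : NormedAddCommGroup K) (_ : InnerProductSpace ℂ K),
      CompleteSpace K ∧ TopologicalSpace.SeparableSpace K ∧
      ∃ W : lp (fun _ : ℕ => K) 2 →L[ℂ] lp (fun _ : ℕ => H) 2,
        Isometry W ∧
        W.comp (shift K) = (shift H).comp W ∧
        LinearMap.range (W : lp (fun _ : ℕ => K) 2 →ₗ[ℂ] lp (fun _ : ℕ => H) 2) = M := by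
  classical
  -- Notation: `S` is the shift as a linear isometry.
  set S : lp (fun _ : ℕ => H) 2 →ₗᵢ[ℂ] lp (fun _ : ℕ => H) 2 := shiftLi H with hS
  have hMinv' : ∀ x ∈ M, S x ∈ M := fun x hx => hMinv x hx
  have hpow_apply : ∀ (n : ℕ) (z : lp (fun _ : ℕ => H) 2), (S ^ (n+1)) z = S ((S ^ n) z) := by
    intro n z; rw [pow_succ']; rfl
  have hpow_apply' : ∀ (n : ℕ) (z : lp (fun _ : ℕ => H) 2), (S ^ (n+1)) z = (S ^ n) (S z) := by
    intro n z; rw [pow_succ]; rfl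
  -- The subspace `S M` and the wandering subspace `L = M ⊓ (S M)ᗮ`.
  set SM : Submodule ℂ (lp (fun _ : ℕ => H) 2) := M.map S.toLinearMap with hSMdef
  have hSM_le : SM ≤ M := by
    rintro _ ⟨x, hx, rfl⟩
    exact hMinv' x hx
  have hSMclosed : IsClosed (SM : Set (lp (fun _ : ℕ => H) 2)) := by
    have h1 : IsComplete (M : Set (lp (fun _ : ℕ => H) 2)) := hMclosed.isComplete
    have h2' : IsComplete (⇑S '' (M : Set (lp (fun _ : ℕ => H) 2))) :=
      (S.isometry.isUniformInducing.isComplete_iff).2 h1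
    have heq : (SM : Set (lp (fun _ : ℕ => H) 2)) = ⇑S '' (M : Set (lp (fun _ : ℕ => H) 2)) := by
      ext z
      simp [hSMdef, Submodule.mem_map, Set.mem_image]
    rw [heq]
    exact h2'.isClosed
  set L : Submodule ℂ (lp (fun _ : ℕ => H) 2) := M ⊓ SMᗮ with hLdef
  have hL_le : L ≤ M := inf_le_left
  have hLclosed : IsClosed (L : Set (lp (fun _ : ℕ => H) 2)) := by
    rw [hLdef, Submodule.coe_inf]
    exact hMclosed.inter SM.isClosed_orthogonal
  haveI : CompleteSpace L := hLclosed.completeSpace_coe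
  haveI hE2sep : TopologicalSpace.SeparableSpace (lp (fun _ : ℕ => H) 2) := lp_two_separableSpace
  haveI : SecondCountableTopology (lp (fun _ : ℕ => H) 2) :=
    UniformSpace.secondCountable_of_separable _
  haveI : TopologicalSpace.SeparableSpace L := inferInstance
  -- Decomposition: an element of `M` orthogonal to `L` lies in `S M`.
  have hdecomp : ∀ x ∈ M, (∀ u ∈ L, ⟪u, x⟫_ℂ = 0) → x ∈ SM := by
    intro x hx hperp
    haveI : CompleteSpace SM := hSMclosed.completeSpace_coe
    have hy : (SM.orthogonalProjectionOnto x : lp (fun _ : ℕ => H) 2) ∈ SM :=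
      (SM.orthogonalProjectionOnto x).2
    set y := (SM.orthogonalProjectionOnto x : lp (fun _ : ℕ => H) 2) with hydef
    have hxy : x - y ∈ SMᗮ := SM.sub_starProjection_mem_orthogonal x
    have hxyL : x - y ∈ L := ⟨M.sub_mem hx (hSM_le hy), hxy⟩
    have h1 : ⟪x - y, x⟫_ℂ = 0 := hperp _ hxyL
    have h2' : ⟪x - y, y⟫_ℂ = 0 :=
      inner_eq_zero_symm.1 ((Submodule.mem_orthogonal SM (x - y)).1 hxy y hy)
    have h3 : ⟪x - y, x - y⟫_ℂ = 0 := by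
      rw [inner_sub_right, h1, h2', sub_zero]
    have h4 : x = y := sub_eq_zero.1 (inner_self_eq_zero.1 h3)
    rw [h4]
    exact hy
  -- Key: an element of `M` orthogonal to every `Sⁿ L` vanishes.
  have hkey : ∀ x ∈ M, (∀ (n : ℕ), ∀ u ∈ L, ⟪(S ^ n) u, x⟫_ℂ = 0) → x = 0 := by
    intro x hx hperp
    have main : ∀ n : ℕ, ∃ y, y ∈ M ∧ x = (S ^ n) y ∧
        (∀ (m : ℕ), ∀ u ∈ L, ⟪(S ^ m) u, y⟫_ℂ = 0) := by
      intro n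
      induction n with
      | zero => exact ⟨x, hx, by simp, hperp⟩
      | succ n ih =>
        obtain ⟨y, hy, hxy, hyperp⟩ := ih
        have hyL : ∀ u ∈ L, ⟪u, y⟫_ℂ = 0 := by
          intro u hu
          have h0 := hyperp 0 u hu
          simpa using h0
        obtain ⟨z, hz, hzy⟩ := Submodule.mem_map.1 (hdecomp y hy hyL)
        refine ⟨z, hz, ?_, ?_⟩
        · rw [hxy, ← hzy, hpow_apply' n z]
          rfl
        · intro m u hu
          have hmu := hyperp (m+1) u hu
          rw [← hzy, hpow_apply m u] at hmu
          rw [show S.toLinearMap z = S z from rfl] at hmu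
          rwa [S.inner_map_map] at hmu
    apply lp.ext
    funext k
    obtain ⟨y, _, hxy, _⟩ := main (k+1)
    have h0 : (x : ℕ → H) k = 0 := by
      rw [hxy, hS]
      exact pow_shiftLi_apply_lt y (Nat.lt_succ_self k)
    rw [h0]
    rfl
  -- A countable Hilbert basis for `L`.
  obtain ⟨w, b, hbw⟩ := exists_hilbertBasis ℂ (↥L)
  have hwon : Orthonormal ℂ (((↑) : w → L)) := by
    rw [← hbw]
    exact b.orthonormal
  have hwcount : w.Countable := by
    apply countable_of_one_le_dist (s := w)
    intro x hx y hy hxy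
    have hne : (⟨x, hx⟩ : w) ≠ (⟨y, hy⟩ : w) := fun hc => hxy (congrArg Subtype.val hc)
    have hx1 : ‖x‖ = 1 := hwon.1 ⟨x, hx⟩
    have hy1 : ‖y‖ = 1 := hwon.1 ⟨y, hy⟩
    have hin : ⟪x, y⟫_ℂ = 0 := hwon.2 hne
    have hsq : ‖x - y‖ ^ 2 = 2 := by
      rw [norm_sub_sq (𝕜 := ℂ), hin, hx1, hy1]
      norm_num
    rw [dist_eq_norm]
    nlinarith [norm_nonneg (x - y)]
  obtain ⟨f0, hf0⟩ := Set.countable_iff_exists_injective.1 hwcount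
  let e : (Set.range f0) ≃ w := (Equiv.ofInjective f0 hf0).symm
  let K : Type := lp (fun _ : Set.range f0 => ℂ) 2
  haveI : TopologicalSpace.SeparableSpace K := lp_two_separableSpace
  let isoKL : K ≃ₗᵢ[ℂ] L := (lpCongr e).trans b.repr.symm
  -- The orthogonal family of copies of `K` inside `ℓ²(ℕ, H)`.
  let V : (n : ℕ) → K →ₗᵢ[ℂ] lp (fun _ : ℕ => H) 2 := fun n =>
    (S ^ n).comp ((L.subtypeₗᵢ).comp isoKL.toLinearIsometry)
  have hVapply : ∀ (n : ℕ) (x : K),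
      V n x = (S ^ n) ((isoKL x : lp (fun _ : ℕ => H) 2)) := fun n x => rfl
  have hmain : ∀ (u v : L) (n d : ℕ),
      ⟪(S ^ n) (u : lp (fun _ : ℕ => H) 2),
        (S ^ (n + d + 1)) (v : lp (fun _ : ℕ => H) 2)⟫_ℂ = 0 := by
    intro u v n d
    have h1 : (S ^ (n + d + 1)) (v : lp (fun _ : ℕ => H) 2)
        = (S ^ n) ((S ^ (d + 1)) (v : lp (fun _ : ℕ => H) 2)) := by
      show (S ^ (n + (d + 1))) (v : lp (fun _ : ℕ => H) 2) = _
      rw [pow_add]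
      rfl
    rw [h1, (S ^ n).inner_map_map]
    have h2' : (S ^ (d + 1)) (v : lp (fun _ : ℕ => H) 2) ∈ SM := by
      refine Submodule.mem_map.2
        ⟨(S ^ d) (v : lp (fun _ : ℕ => H) 2), ?_, ?_⟩
      · rw [hS]
        exact pow_shiftLi_mem (by rw [← hS]; exact hMinv') (hL_le v.2) d
      · rw [hpow_apply d (v : lp (fun _ : ℕ => H) 2)]
        rfl
    have huo : (u : lp (fun _ : ℕ => H) 2) ∈ SMᗮ := (Submodule.mem_inf.1 u.2).2
    exact inner_eq_zero_symm.1 ((Submodule.mem_orthogonal SM _).1 huo _ h2')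
  have hV : OrthogonalFamily ℂ (fun _ : ℕ => K) V := by
    intro n m hnm x y
    rcases Nat.lt_or_ge n m with h | h
    · have hm : m = n + (m - n - 1) + 1 := by omega
      rw [hVapply, hVapply, hm]
      exact hmain _ _ n (m - n - 1)
    · have hn : n = m + (n - m - 1) + 1 := by omega
      rw [hVapply, hVapply]
      refine inner_eq_zero_symm.1 ?_
      rw [hn]
      exact hmain _ _ m (n - m - 1)
  -- The inner operator.
  set Wli := hV.linearIsometry with hWdef
  have hNle : (⨆ n, LinearMap.range (V n).toLinearMap).topologicalClosure ≤ M := by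
    refine Submodule.topologicalClosure_minimal _ ?_ hMclosed
    refine iSup_le fun n => ?_
    rintro z ⟨x, rfl⟩
    show (S ^ n) ((isoKL x : lp (fun _ : ℕ => H) 2)) ∈ M
    rw [hS]
    exact pow_shiftLi_mem (by rw [← hS]; exact hMinv') (hL_le (isoKL x).2) n
  refine ⟨K, inferInstance, inferInstance, inferInstance, inferInstance,
    Wli.toContinuousLinearMap, Wli.isometry, ?_, ?_⟩
  · -- intertwining
    apply clm_ext_lp (G := K)
    intro i x
    rw [ContinuousLinearMap.comp_apply, ContinuousLinearMap.comp_apply]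
    rw [show shift K (lp.single 2 i x) = lp.single 2 (i+1) x from shiftLi_single i x]
    show Wli (lp.single 2 (i+1) x) = shift H (Wli (lp.single 2 i x))
    rw [hWdef, hV.linearIsometry_apply_single, hV.linearIsometry_apply_single]
    rw [hVapply, hVapply, hpow_apply i _]
    rfl
  · -- range
    have hr : LinearMap.range (Wli.toContinuousLinearMap : lp (fun _ : ℕ => K) 2 →ₗ[ℂ] lp (fun _ : ℕ => H) 2) = LinearMap.range Wli.toLinearMap := by
      ext z
      simp only [LinearMap.mem_range, ContinuousLinearMap.coe_coe]
      rfl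
    rw [hr, hWdef, hV.range_linearIsometry]
    apply le_antisymm hNle
    intro x hx
    set N := (⨆ n, LinearMap.range (V n).toLinearMap).topologicalClosure with hNdef
    have hNclosed : IsClosed (N : Set (lp (fun _ : ℕ => H) 2)) := by
      rw [hNdef]
      exact Submodule.isClosed_topologicalClosure _
    haveI : CompleteSpace N := hNclosed.completeSpace_coe
    have hyN : (N.orthogonalProjectionOnto x : lp (fun _ : ℕ => H) 2) ∈ N :=
      (N.orthogonalProjectionOnto x).2
    have hsub : x - N.orthogonalProjectionOnto x ∈ Nᗮ := N.sub_starProjection_mem_orthogonal x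
    have hz : x - (N.orthogonalProjectionOnto x : lp (fun _ : ℕ => H) 2) = 0 := by
      apply hkey _ (M.sub_mem hx (hNle hyN))
      intro n u hu
      apply (Submodule.mem_orthogonal N _).1 hsub
      have h5 : isoKL (isoKL.symm ⟨u, hu⟩) = ⟨u, hu⟩ := isoKL.apply_symm_apply _
      have h6 : (S ^ n) u = (V n).toLinearMap (isoKL.symm ⟨u, hu⟩) := by
        rw [show (V n).toLinearMap (isoKL.symm ⟨u, hu⟩)
          = (S ^ n) ((isoKL (isoKL.symm ⟨u, hu⟩) : lp (fun _ : ℕ => H) 2)) from rfl, h5]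
      rw [h6]
      exact Submodule.le_topologicalClosure _
        (le_iSup (fun n => LinearMap.range (V n).toLinearMap) n ⟨_, rfl⟩)
    exact (sub_eq_zero.1 hz) ▸ hyN

end Shift
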